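/- In a free group F (on an arbitrary set of generators), no nontrivial element is conjugate to its own inverse: if w, g ∈ F satisfy g w g⁻¹ = w⁻¹, then w = 1. -/

import Mathlib

open List

namespace Stmt15

variable {α : Type*}

open FreeGroup

/-- The formal inverse of a letter. -/
def bar (x : α × Bool) : α × Bool := (x.1, !x.2)

@[simp] lemma bar_bar (x : α × Bool) : bar (bar x) = x := by simp [bar]

lemma bar_ne_self (x : α × Bool) : bar x ≠ x := by
  simp [bar, Prod.ext_iff]

/-- A word is reduced. -/
def IsRed (L : List (α × Bool)) : Prop := List.Chain' (fun a b => b ≠ bar a) L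

/-- A word is cyclically reduced. -/
def CycRed (L : List (α × Bool)) : Prop := List.Chain' (fun a b => b ≠ bar a) (L ++ L)

lemma invRev_cons (x : α × Bool) (L : List (α × Bool)) :
    invRev (x :: L) = invRev L ++ [bar x] := by simp [invRev, bar]

lemma invRev_append' (L₁ L₂ : List (α × Bool)) :
    invRev (L₁ ++ L₂) = invRev L₂ ++ invRev L₁ := by simp [invRev]

lemma invRev_singleton (x : α × Bool) : invRev [x] = [bar x] := by simp [invRev, bar]

lemma mk_singleton_inv (x : α × Bool) : (mk [x])⁻¹ = mk [bar x] := by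
  rw [inv_mk, invRev_singleton]

lemma isRed_nil : IsRed ([] : List (α × Bool)) := List.isChain_nil

section DecEq
variable [DecidableEq α]

lemma reduce_eq_self : ∀ {L : List (α × Bool)}, IsRed L → reduce L = L
  | [], _ => rfl
  | [x], _ => rfl
  | x :: y :: L, h => by
    obtain ⟨h1, h2⟩ := List.isChain_cons_cons.1 h
    have hrec : reduce (y :: L) = y :: L := reduce_eq_self h2
    rw [reduce.cons, hrec]
    have hne : ¬(x.1 = y.1 ∧ x.2 = !y.2) := by
      rintro ⟨ha, hb⟩
      apply h1
      have hb2 : y.2 = !x.2 := by rw [hb, Bool.not_not]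
      exact Prod.ext ha.symm hb2
    simp only [hne, if_false]

lemma isRed_reduce (L : List (α × Bool)) : IsRed (reduce L) := by
  rw [IsRed, List.Chain', List.isChain_iff_getElem]
  intro i hi
  by_contra hbad
  set M := reduce L with hM
  have hi1 : i + 1 < M.length := by omega
  have hi0 : i < M.length := by omega
  have hsplit : M = M.take i ++ M[i] :: M[i+1] :: M.drop (i+2) := by
    conv_lhs => rw [← List.take_append_drop i M]
    congr 1
    rw [List.drop_eq_getElem_cons hi0]
    congr 1
    rw [List.drop_eq_getElem_cons hi1]
  have e2 : M[i+1] = (M[i].1, !M[i].2) := by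
    simpa [bar, List.get_eq_getElem] using hbad
  have hM2 : reduce L = M.take i ++ (M[i].1, M[i].2) :: (M[i].1, !M[i].2) :: M.drop (i+2) := by
    rw [← hM, ← e2]
    exact hsplit
  exact FreeGroup.reduce.not hM2

lemma isRed_toWord (x : FreeGroup α) : IsRed x.toWord := by
  rcases x with ⟨L⟩
  exact isRed_reduce L

lemma toWord_mk_eq {L : List (α × Bool)} (h : IsRed L) : (mk L).toWord = L := by
  rw [FreeGroup.toWord_mk, reduce_eq_self h]

lemma mk_inj {L₁ L₂ : List (α × Bool)} (h₁ : IsRed L₁) (h₂ : IsRed L₂)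
    (h : mk L₁ = mk L₂) : L₁ = L₂ := by
  rw [← toWord_mk_eq h₁, ← toWord_mk_eq h₂, h]

end DecEq

lemma cycRed_isRed {C : List (α × Bool)} (h : CycRed C) : IsRed C :=
  h.infix (C.prefix_append C).isInfix

lemma cycRed_chain3 {C : List (α × Bool)} (h : CycRed C) :
    List.Chain' (fun a b => b ≠ bar a) (C ++ (C ++ C)) := by
  rcases C with _ | ⟨c, C₀⟩
  · simp [List.Chain']
  refine List.isChain_append.2 ⟨cycRed_isRed h, h, ?_⟩
  have := List.isChain_append.1 h
  intro x hx y hy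
  refine this.2.2 x hx y ?_
  simpa using hy

lemma cycRed_rotate {C : List (α × Bool)} (h : CycRed C) (n : ℕ) : CycRed (C.rotate n) := by
  rw [List.rotate_eq_drop_append_take_mod]
  set m := n % C.length with hm
  set t := C.take m with ht
  set d := C.drop m with hd
  have hC : C = t ++ d := (List.take_append_drop m C).symm
  have h3 := cycRed_chain3 h
  rw [CycRed]
  refine h3.infix ⟨t, d, ?_⟩
  rw [hC]
  simp only [List.append_assoc]

lemma cycRed_of_rot {C C' : List (α × Bool)} (h : CycRed C) (h' : C ~r C') : CycRed C' := by
  obtain ⟨n, rfl⟩ := h'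
  exact cycRed_rotate h n


lemma bar_inj {x y : α × Bool} (h : bar x = bar y) : x = y := by
  have := congrArg bar h
  simpa using this

lemma chain'_append_singleton {l : List (α × Bool)} {y : α × Bool}
    (h : List.Chain' (fun a b => b ≠ bar a) l)
    (h2 : ∀ x ∈ l.getLast?, y ≠ bar x) :
    List.Chain' (fun a b => b ≠ bar a) (l ++ [y]) := by
  refine List.isChain_append.2 ⟨h, List.isChain_singleton y, ?_⟩
  intro x hx z hz
  simp only [List.head?_cons, Option.mem_def, Option.some.injEq] at hz
  subst hz
  exact h2 x hx

lemma isRed_sandwich {x y : α × Bool} {M : List (α × Bool)} (hM : IsRed M)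
    (hhead : ∀ z ∈ M.head?, z ≠ bar x)
    (hlast : ∀ z ∈ M.getLast?, y ≠ bar z)
    (hxy : M = [] → y ≠ bar x) :
    List.Chain' (fun a b => b ≠ bar a) (x :: (M ++ [y])) := by
  rcases M with _ | ⟨m, M₀⟩
  · simpa [List.Chain'] using hxy rfl
  · refine List.isChain_cons_cons.2 ⟨hhead m (by simp), ?_⟩
    exact chain'_append_singleton hM hlast

lemma mk_cons' (x : α × Bool) (M : List (α × Bool)) : mk (x :: M) = mk [x] * mk M := by
  rw [mul_mk]; rfl

lemma mk_concat' (M : List (α × Bool)) (x : α × Bool) : mk (M ++ [x]) = mk M * mk [x] := by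
  rw [mul_mk]

lemma mk_sandwich (x : α × Bool) (M : List (α × Bool)) :
    mk ([x] ++ M ++ invRev [x]) = mk [x] * mk M * (mk [x])⁻¹ := by
  rw [invRev_singleton, mk_singleton_inv]
  conv_rhs => rw [mul_mk, mul_mk]

lemma keyC (ℓ : α × Bool) (P C : List (α × Bool))
    (hr : IsRed (P ++ C ++ invRev P)) (hc : CycRed C) :
    ∃ P₂ C₂ : List (α × Bool),
      mk [ℓ] * mk (P ++ C ++ invRev P) * (mk [ℓ])⁻¹ = mk (P₂ ++ C₂ ++ invRev P₂) ∧
      IsRed (P₂ ++ C₂ ++ invRev P₂) ∧ CycRed C₂ ∧ C ~r C₂ := by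
  rcases P with _ | ⟨p, P₀⟩
  · rcases C with _ | ⟨c, C₀⟩
    · refine ⟨[], [], ?_, isRed_nil, List.isChain_nil, .refl _⟩
      simp only [List.append_nil, List.nil_append, invRev_empty, ← FreeGroup.one_eq_mk]
      have h0 : mk [ℓ] * (mk [ℓ])⁻¹ = (1 : FreeGroup α) := mul_inv_cancel _
      rw [mk_singleton_inv, mul_mk] at h0
      simpa [bar, invRev] using h0
    · by_cases h1 : c = bar ℓ
      · subst h1
        have hrot : (bar ℓ :: C₀) ~r (C₀ ++ [bar ℓ]) := by
          simpa using List.isRotated_append (l := [bar ℓ]) (l' := C₀)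
        have hc2 : CycRed (C₀ ++ [bar ℓ]) := cycRed_of_rot hc hrot
        refine ⟨[], C₀ ++ [bar ℓ], ?_, by simpa [invRev] using cycRed_isRed hc2, hc2, hrot⟩
        simp only [List.nil_append, List.append_nil, invRev_empty]
        rw [mk_cons' (bar ℓ) C₀, mk_concat' C₀ (bar ℓ), ← mk_singleton_inv ℓ]
        group
      · by_cases h2 : (c :: C₀).getLast (by simp) = ℓ
        · set D := (c :: C₀).dropLast with hD
          have hCd : c :: C₀ = D ++ [ℓ] := by
            conv_lhs => rw [← List.dropLast_append_getLast (l := c :: C₀) (by simp), h2]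
          have hrot : (c :: C₀) ~r (ℓ :: D) := by
            rw [hCd]
            simpa using List.isRotated_append (l := D) (l' := [ℓ])
          have hc2 : CycRed (ℓ :: D) := cycRed_of_rot hc hrot
          refine ⟨[], ℓ :: D, ?_, by simpa [invRev] using cycRed_isRed hc2, hc2, hrot⟩
          simp only [List.nil_append, List.append_nil, invRev_empty]
          rw [hCd, mk_concat' D ℓ, mk_cons' ℓ D]
          group
        · refine ⟨[ℓ], c :: C₀, ?_, ?_, hc, .refl _⟩
          · rw [mk_sandwich]
            simp [invRev]
          · have : List.Chain' (fun a b => b ≠ bar a) (ℓ :: ((c :: C₀) ++ [bar ℓ])) := by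
              refine isRed_sandwich (cycRed_isRed hc) ?_ ?_ (by simp)
              · intro z hz
                simp only [List.head?_cons, Option.mem_def, Option.some.injEq] at hz
                subst hz; exact h1
              · intro z hz
                rw [List.getLast?_eq_getLast (l := c :: C₀) (by simp)] at hz
                have hz' : (c :: C₀).getLast (by simp) = z := by simpa using hz
                subst hz'
                intro habs
                exact h2 (bar_inj habs).symm
            simpa [invRev_singleton, IsRed] using this
  · by_cases hp : p = bar ℓ
    · subst hp
      refine ⟨P₀, C, ?_, ?_, hc, .refl _⟩
      · have hl : (bar ℓ :: P₀) ++ C ++ invRev (bar ℓ :: P₀)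
            = bar ℓ :: ((P₀ ++ C ++ invRev P₀) ++ [ℓ]) := by
          simp [invRev_cons]
        rw [hl, mk_cons' (bar ℓ) ((P₀ ++ C ++ invRev P₀) ++ [ℓ]),
          mk_concat' (P₀ ++ C ++ invRev P₀) ℓ, ← mk_singleton_inv ℓ]
        group
      · exact hr.infix ⟨[bar ℓ], [ℓ], by simp [invRev_cons]⟩
    · refine ⟨ℓ :: p :: P₀, C, ?_, ?_, hc, .refl _⟩
      · have hl : (ℓ :: p :: P₀) ++ C ++ invRev (ℓ :: p :: P₀)
            = [ℓ] ++ ((p :: P₀) ++ C ++ invRev (p :: P₀)) ++ invRev [ℓ] := by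
          simp [invRev_cons, invRev_singleton]
        rw [hl, mk_sandwich]
      · have : List.Chain' (fun a b => b ≠ bar a)
            (ℓ :: (((p :: P₀) ++ C ++ invRev (p :: P₀)) ++ [bar ℓ])) := by
          refine isRed_sandwich hr ?_ ?_ (by simp)
          · intro z hz
            simp only [List.cons_append, List.head?_cons, Option.mem_def,
              Option.some.injEq] at hz
            subst hz; exact hp
          · intro z hz
            have hsh : (p :: P₀) ++ C ++ invRev (p :: P₀)
                = ((p :: P₀) ++ C ++ invRev P₀) ++ [bar p] := by
              simp [invRev_cons]
            rw [hsh, List.getLast?_concat] at hz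
            simp only [Option.mem_def, Option.some.injEq] at hz
            subst hz
            simp only [bar_bar]
            exact fun habs => hp habs.symm
        have hsh2 : (ℓ :: p :: P₀) ++ C ++ invRev (ℓ :: p :: P₀)
            = ℓ :: (((p :: P₀) ++ C ++ invRev (p :: P₀)) ++ [bar ℓ]) := by
          simp [invRev_cons]
        rw [IsRed, hsh2]
        exact this

lemma keyB (G : List (α × Bool)) (P C : List (α × Bool))
    (hr : IsRed (P ++ C ++ invRev P)) (hc : CycRed C) :
    ∃ Q C' : List (α × Bool),
      mk G * mk (P ++ C ++ invRev P) * (mk G)⁻¹ = mk (Q ++ C' ++ invRev Q) ∧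
      IsRed (Q ++ C' ++ invRev Q) ∧ CycRed C' ∧ C ~r C' := by
  induction G generalizing P C with
  | nil =>
    refine ⟨P, C, ?_, hr, hc, .refl _⟩
    rw [← FreeGroup.one_eq_mk]
    group
  | cons ℓ G' ih =>
    obtain ⟨Q₁, C₁, heq1, hred1, hc1, hrot1⟩ := ih P C hr hc
    obtain ⟨Q₂, C₂, heq2, hred2, hc2, hrot2⟩ := keyC ℓ Q₁ C₁ hred1 hc1
    refine ⟨Q₂, C₂, ?_, hred2, hc2, hrot1.trans hrot2⟩
    rw [show (ℓ :: G' : List (α × Bool)) = [ℓ] ++ G' by rfl, ← mul_mk]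
    rw [mul_inv_rev]
    calc mk [ℓ] * mk G' * mk (P ++ C ++ invRev P) * ((mk G')⁻¹ * (mk [ℓ])⁻¹)
        = mk [ℓ] * (mk G' * mk (P ++ C ++ invRev P) * (mk G')⁻¹) * (mk [ℓ])⁻¹ := by group
      _ = mk [ℓ] * mk (Q₁ ++ C₁ ++ invRev Q₁) * (mk [ℓ])⁻¹ := by rw [heq1]
      _ = mk (Q₂ ++ C₂ ++ invRev Q₂) := heq2

lemma decomp : ∀ (n : ℕ) (L : List (α × Bool)), L.length ≤ n → IsRed L →
    ∃ P C, L = P ++ C ++ invRev P ∧ CycRed C := by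
  intro n
  induction n with
  | zero =>
    intro L hL _
    have : L = [] := List.length_eq_zero_iff.1 (Nat.le_zero.1 hL)
    exact ⟨[], [], by simp [this, invRev], List.isChain_nil⟩
  | succ n ih =>
    intro L hL hr
    by_cases hcyc : CycRed L
    · exact ⟨[], L, by simp [invRev], hcyc⟩
    · -- the junction condition must fail
      have hjunc : ¬ (∀ x ∈ L.getLast?, ∀ y ∈ L.head?, y ≠ bar x) := by
        intro hj
        exact hcyc (List.isChain_append.2 ⟨hr, hr, hj⟩)
      push_neg at hjunc
      obtain ⟨x, hx, y, hy, hyx⟩ := hjunc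
      have hLne : L ≠ [] := by rintro rfl; simp at hx
      have hL1 : L = L.dropLast ++ [x] := by
        have h1 := List.dropLast_append_getLast hLne
        rw [List.getLast?_eq_getLast (l := L) hLne] at hx
        have hx2 : L.getLast hLne = x := by simpa using hx
        rw [hx2] at h1
        exact h1.symm
      rcases hD : L.dropLast with _ | ⟨h0, M⟩
      · -- L = [x], so y = x and y = bar x : contradiction
        rw [hD, List.nil_append] at hL1
        have hyx2 : x = y := by
          rw [hL1] at hy
          simpa using hy
        rw [← hyx2] at hyx
        exact absurd hyx.symm (bar_ne_self x)
      · rw [hD] at hL1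
        have hy0 : h0 = y := by
          rw [hL1] at hy
          simpa using hy
        have hx0 : x = bar h0 := by
          rw [hy0, hyx, bar_bar]
        have hM : IsRed M := by
          refine hr.infix ⟨[h0], [x], ?_⟩
          rw [hL1]
          simp
        have hMlen : M.length ≤ n := by
          have := congrArg List.length hL1
          simp at this
          omega
        obtain ⟨P₀, C, hM2, hC⟩ := ih M hMlen hM
        refine ⟨h0 :: P₀, C, ?_, hC⟩
        rw [hL1, hM2, hx0]
        simp [invRev_cons]

lemma invRev_getElem (L : List (α × Bool)) (i : ℕ) (hi : i < L.length) :
    (invRev L)[i]'(by rw [invRev_length]; exact hi)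
      = bar (L[L.length - 1 - i]'(by omega)) := by
  simp [invRev, bar, List.getElem_reverse]

lemma self_invRev_nil {V : List (α × Bool)} (hV : IsRed V) (h : V = invRev V) :
    V = [] := by
  by_contra hne
  have hn1 : 1 ≤ V.length := List.length_pos_iff.2 hne
  have hget : ∀ (i : ℕ) (hi : i < V.length) (hi' : V.length - 1 - i < V.length),
      V[i]'hi = bar (V[V.length - 1 - i]'hi') := by
    intro i hi hi'
    have h2 := invRev_getElem V i hi
    have h3 : V[i]'hi = (invRev V)[i]'(by rw [invRev_length]; exact hi) :=
      List.getElem_of_eq h hi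
    rw [h3, h2]
  rcases Nat.even_or_odd V.length with he | ho
  · obtain ⟨k, hk⟩ := he
    have hn2 : 2 ≤ V.length := by omega
    have hidx : V.length - 1 - V.length / 2 = V.length / 2 - 1 := by omega
    have hkey := hget (V.length / 2) (by omega) (by omega)
    simp only [hidx] at hkey
    have hch := List.isChain_iff_getElem.1 hV (V.length / 2 - 1) (by omega)
    apply hch
    have hplus : V.length / 2 - 1 + 1 = V.length / 2 := by omega
    simp only [hplus]
    exact hkey
  · obtain ⟨k, hk⟩ := ho
    have hidx : V.length - 1 - V.length / 2 = V.length / 2 := by omega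
    have hkey := hget (V.length / 2) (by omega) (by omega)
    simp only [hidx] at hkey
    exact bar_ne_self _ hkey.symm

end Stmt15

theorem statement15 {α : Type*} (w g : FreeGroup α) (h : g * w * g⁻¹ = w⁻¹) :
    w = 1 := by
  classical
  open Stmt15 FreeGroup in
  obtain ⟨P, C, hW, hC⟩ := Stmt15.decomp (w.toWord.length) w.toWord le_rfl (isRed_toWord w)
  have hw : w = mk (P ++ C ++ invRev P) := by rw [← hW, mk_toWord]
  have hredW : IsRed (P ++ C ++ invRev P) := hW ▸ isRed_toWord w
  obtain ⟨Q, C', heq, hredQ, hC', hrot⟩ := keyB g.toWord P C hredW hC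
  rw [mk_toWord, ← hw, h] at heq
  -- the reduced word of w⁻¹
  have hlist : invRev (P ++ C ++ invRev P) = P ++ invRev C ++ invRev P := by
    rw [invRev_append', invRev_append', invRev_invRev]
    simp
  have hinv : w⁻¹ = mk (P ++ invRev C ++ invRev P) := by
    rw [hw, inv_mk, hlist]
  have hredInv : IsRed (P ++ invRev C ++ invRev P) := by
    have h1 : (w⁻¹).toWord = invRev w.toWord := toWord_inv w
    rw [hW, hlist] at h1
    exact h1 ▸ isRed_toWord w⁻¹
  -- uniqueness of reduced words
  have hlists : Q ++ C' ++ invRev Q = P ++ invRev C ++ invRev P :=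
    mk_inj hredQ hredInv (by rw [← heq, ← hinv])
  have hlenC : C'.length = C.length := (hrot.perm.length_eq).symm
  have hlenQ : Q.length = P.length := by
    have := congrArg List.length hlists
    simp only [List.length_append, invRev_length] at this
    omega
  rw [List.append_assoc, List.append_assoc] at hlists
  obtain ⟨hQP, hrest⟩ := List.append_inj hlists hlenQ
  obtain ⟨hCC, -⟩ := List.append_inj hrest (by rw [hlenC, invRev_length])
  -- so invRev C is a rotation of C
  obtain ⟨nrot, hnrot⟩ := hrot
  have hCrot : C.drop (nrot % C.length) ++ C.take (nrot % C.length) = invRev C := by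
    rw [← List.rotate_eq_drop_append_take_mod, hnrot, hCC]
  have hCsplit : C = C.take (nrot % C.length) ++ C.drop (nrot % C.length) :=
    (List.take_append_drop _ C).symm
  set t := C.take (nrot % C.length) with ht
  set d := C.drop (nrot % C.length) with hd
  have hinvC : invRev C = invRev d ++ invRev t := by
    rw [hCsplit, invRev_append']
  have heq2 : d ++ t = invRev d ++ invRev t := by rw [hCrot, hinvC]
  obtain ⟨hd2, ht2⟩ := List.append_inj heq2 (by rw [invRev_length])
  have hredC : IsRed C := cycRed_isRed hC
  have hdnil : d = [] := self_invRev_nil (hredC.infix ⟨t, [], by simp [← hCsplit]⟩) hd2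
  have htnil : t = [] := self_invRev_nil (hredC.infix ⟨[], d, by simp [← hCsplit]⟩) ht2
  have hCnil : C = [] := by rw [hCsplit, hdnil, htnil]; rfl
  rw [hw, hCnil]
  rw [show (P ++ [] ++ invRev P) = P ++ invRev P by simp, ← mul_mk, ← inv_mk,
    mul_inv_cancel]
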